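/- arXiv:0901.2147 — 3 statements merged into one kernel-verified Lean document; each statement's English description precedes it below -/
import Mathlib

section
/- Let A be an m × n binary matrix such that the map x ↦ Ax (over 𝔽₂) is injective on k-sparse vectors in 𝔽₂^n. Define a ∈ ℝ^n by a_i = Σ_{j=1}^m A(j,i) · 2^(j·⌈log₂(k+1)⌉). Then the map x ↦ a·x (real inner product) is injective on k-sparse vectors in {0,1}^n ⊆ ℝ^n. -/
lemma base_unique (B : ℕ) (hB : 0 < B) :
    ∀ (m : ℕ) (f g : Fin m → ℕ), (∀ j, f j < B) → (∀ j, g j < B) →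
    (∑ j, f j * B ^ j.val = ∑ j, g j * B ^ j.val) → f = g := by
  intro m
  induction m with
  | zero => intro f g _ _ _; funext j; exact j.elim0
  | succ m ih =>
    intro f g hf hg h
    rw [Fin.sum_univ_succ, Fin.sum_univ_succ] at h
    simp only [Fin.val_succ, Fin.val_zero, pow_zero, mul_one, pow_succ] at h
    have h' : f 0 + B * ∑ j : Fin m, f j.succ * B ^ j.val
        = g 0 + B * ∑ j : Fin m, g j.succ * B ^ j.val := by
      rw [Finset.mul_sum, Finset.mul_sum] at *
      convert h using 2 <;> · apply Finset.sum_congr rfl; intro j _; ring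
    have h0 : f 0 = g 0 := by
      have := congrArg (· % B) h'
      simpa [Nat.add_mul_mod_self_left, Nat.mod_eq_of_lt (hf 0), Nat.mod_eq_of_lt (hg 0)]
        using this
    have hs : ∑ j : Fin m, f j.succ * B ^ j.val = ∑ j : Fin m, g j.succ * B ^ j.val := by
      rw [h0] at h'
      exact Nat.eq_of_mul_eq_mul_left hB (Nat.add_left_cancel h')
    have := ih (fun j => f j.succ) (fun j => g j.succ) (fun j => hf j.succ) (fun j => hg j.succ) hs
    funext j
    refine Fin.cases h0 (fun j => congrFun this j) j

theorem stmt_1 (m n k : ℕ) (A : Matrix (Fin m) (Fin n) ℕ)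
    (hbin : ∀ j i, A j i ≤ 1)
    (hinj : Set.InjOn (fun x : Fin n → ZMod 2 => (A.map (Nat.cast : ℕ → ZMod 2)).mulVec x)
      {x : Fin n → ZMod 2 | (Finset.univ.filter (fun i => x i ≠ 0)).card ≤ k})
    (a : Fin n → ℝ)
    (ha : ∀ i, a i = ∑ j : Fin m, (A j i : ℝ) * 2 ^ ((j.val + 1) * Nat.clog 2 (k + 1))) :
    Set.InjOn (fun x : Fin n → ℝ => ∑ i : Fin n, a i * x i)
      {x : Fin n → ℝ | (∀ i, x i = 0 ∨ x i = 1) ∧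
        (Finset.univ.filter (fun i => x i ≠ 0)).card ≤ k} := by
  intro x hx y hy h
  obtain ⟨hx01, hxk⟩ := hx
  obtain ⟨hy01, hyk⟩ := hy
  set c := Nat.clog 2 (k + 1) with hc
  -- natural number versions
  set X : Fin n → ℕ := fun i => if x i = 0 then 0 else 1 with hX
  set Y : Fin n → ℕ := fun i => if y i = 0 then 0 else 1 with hY
  have hxX : ∀ i, x i = (X i : ℝ) := by
    intro i; rcases hx01 i with h | h <;> simp [hX, h]
  have hyY : ∀ i, y i = (Y i : ℝ) := by
    intro i; rcases hy01 i with h | h <;> simp [hY, h]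
  set S : Fin m → ℕ := fun j => ∑ i, A j i * X i with hS
  set T : Fin m → ℕ := fun j => ∑ i, A j i * Y i with hT
  -- rewrite the real sums as casts of naturals
  have key : ∀ (Z : Fin n → ℕ), ∑ i : Fin n, a i * (Z i : ℝ)
      = ((∑ j : Fin m, (∑ i, A j i * Z i) * 2 ^ ((j.val + 1) * c) : ℕ) : ℝ) := by
    intro Z
    push_cast
    simp only [ha, Finset.sum_mul]
    rw [Finset.sum_comm]
    apply Finset.sum_congr rfl; intro j _
    apply Finset.sum_congr rfl; intro i _
    ring
  have hnat : (∑ j : Fin m, S j * 2 ^ ((j.val + 1) * c))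
      = ∑ j : Fin m, T j * 2 ^ ((j.val + 1) * c) := by
    have := h
    simp only [funext_iff] at *
    have h2 : ∑ i : Fin n, a i * x i = ∑ i : Fin n, a i * y i := h
    rw [show (∑ i : Fin n, a i * x i) = ∑ i : Fin n, a i * (X i : ℝ) by
          exact Finset.sum_congr rfl fun i _ => by rw [hxX i],
        show (∑ i : Fin n, a i * y i) = ∑ i : Fin n, a i * (Y i : ℝ) by
          exact Finset.sum_congr rfl fun i _ => by rw [hyY i],
        key X, key Y] at h2
    exact_mod_cast h2
  -- bounds on digits
  have hkc : k < 2 ^ c := lt_of_lt_of_le (Nat.lt_succ_self k) (Nat.le_pow_clog one_lt_two _)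
  have hbound : ∀ (Z : Fin n → ℕ) (z : Fin n → ℝ), (∀ i, Z i = if z i = 0 then 0 else 1) →
      (Finset.univ.filter (fun i => z i ≠ 0)).card ≤ k → ∀ j, (∑ i, A j i * Z i) < 2 ^ c := by
    intro Z z hZ hcard j
    calc ∑ i, A j i * Z i ≤ ∑ i ∈ Finset.univ.filter (fun i => z i ≠ 0), 1 := by
          rw [Finset.sum_filter]
          apply Finset.sum_le_sum
          intro i _
          by_cases hzi : z i = 0 <;> simp [hZ i, hzi, hbin j i]
      _ ≤ k := by simpa using hcard
      _ < 2 ^ c := hkc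
  -- convert to base 2^c representation with exponent j
  have hnat' : (∑ j : Fin m, S j * (2 ^ c) ^ j.val) = ∑ j : Fin m, T j * (2 ^ c) ^ j.val := by
    have e : ∀ (f : Fin m → ℕ), ∑ j : Fin m, f j * 2 ^ ((j.val + 1) * c)
        = 2 ^ c * ∑ j : Fin m, f j * (2 ^ c) ^ j.val := by
      intro f
      rw [Finset.mul_sum]
      apply Finset.sum_congr rfl; intro j _
      rw [add_mul, one_mul, pow_add, ← pow_mul, mul_comm c j.val]
      ring
    rw [e, e] at hnat
    exact Nat.eq_of_mul_eq_mul_left (pow_pos two_pos c) hnat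
  have hST : S = T :=
    base_unique (2 ^ c) (pow_pos two_pos c) m S T
      (hbound X x (fun i => rfl) hxk) (hbound Y y (fun i => rfl) hyk) hnat'
  -- pass to ZMod 2
  set xz : Fin n → ZMod 2 := fun i => (X i : ZMod 2) with hxz
  set yz : Fin n → ZMod 2 := fun i => (Y i : ZMod 2) with hyz
  have hmulvec : ∀ (Z : Fin n → ℕ),
      (A.map (Nat.cast : ℕ → ZMod 2)).mulVec (fun i => (Z i : ZMod 2))
        = fun j => ((∑ i, A j i * Z i : ℕ) : ZMod 2) := by
    intro Z
    funext j
    simp [Matrix.mulVec, Matrix.map, dotProduct]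
  have hmemx : xz ∈ {v : Fin n → ZMod 2 | (Finset.univ.filter (fun i => v i ≠ 0)).card ≤ k} := by
    refine le_trans (Finset.card_le_card ?_) hxk
    intro i hi
    simp only [Finset.mem_filter, Finset.mem_univ, true_and] at hi ⊢
    intro h0
    refine hi ?_
    show ((if x i = 0 then (0:ℕ) else 1 : ℕ) : ZMod 2) = 0
    rw [if_pos h0]; simp
  have hmemy : yz ∈ {v : Fin n → ZMod 2 | (Finset.univ.filter (fun i => v i ≠ 0)).card ≤ k} := by
    refine le_trans (Finset.card_le_card ?_) hyk
    intro i hi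
    simp only [Finset.mem_filter, Finset.mem_univ, true_and] at hi ⊢
    intro h0
    refine hi ?_
    show ((if y i = 0 then (0:ℕ) else 1 : ℕ) : ZMod 2) = 0
    rw [if_pos h0]; simp
  have heq : xz = yz := by
    apply hinj hmemx hmemy
    simp only [hxz, hyz, hmulvec X, hmulvec Y]
    funext j
    rw [show (∑ i, A j i * X i) = S j from rfl, show (∑ i, A j i * Y i) = T j from rfl, hST]
  funext i
  have hi := congrFun heq i
  rcases hx01 i with h0 | h1 <;> rcases hy01 i with g0 | g1
  · rw [h0, g0]
  · exfalso; simp [hxz, hyz, hX, hY, h0, g1] at hi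
  · exfalso; simp [hxz, hyz, hX, hY, h1, g0] at hi
  · rw [h1, g1]
end

section
/- Let A be invertible with Ax = b, b ≠ 0, and (A + ΔA)y = b + Δb with ‖ΔA‖_∞ ≤ ε‖A‖_∞, ‖Δb‖_∞ ≤ ε‖b‖_∞, and ε·κ_∞(A) ≤ 1/2, where κ_∞(A) = ‖A‖_∞‖A⁻¹‖_∞. Then ‖x − y‖_∞ / ‖x‖_∞ ≤ 4·ε·κ_∞(A). -/
open Matrix

/-- Operator ∞-norm of a square complex matrix: maximum absolute row sum. -/
noncomputable def normInf {n : ℕ} (M : Matrix (Fin n) (Fin n) ℂ) : ℝ :=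
  ⨆ i : Fin n, ∑ j : Fin n, ‖M i j‖

/-- Condition number w.r.t. the operator ∞-norm. -/
noncomputable def condInf {n : ℕ} (M : Matrix (Fin n) (Fin n) ℂ) : ℝ :=
  normInf M * normInf M⁻¹

lemma normInf_nonneg {n : ℕ} [NeZero n] (M : Matrix (Fin n) (Fin n) ℂ) :
    0 ≤ normInf M := by
  refine le_ciSup_of_le (Set.Finite.bddAbove (Set.finite_range _)) ⟨0, Nat.pos_of_ne_zero (NeZero.ne n)⟩ ?_
  exact Finset.sum_nonneg fun j _ => norm_nonneg _

lemma mulVec_norm_le {n : ℕ} [NeZero n] (M : Matrix (Fin n) (Fin n) ℂ) (v : Fin n → ℂ) :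
    ‖M.mulVec v‖ ≤ normInf M * ‖v‖ := by
  rw [pi_norm_le_iff_of_nonneg (mul_nonneg (normInf_nonneg M) (norm_nonneg v))]
  intro i
  calc ‖M.mulVec v i‖ = ‖∑ j, M i j * v j‖ := rfl
    _ ≤ ∑ j, ‖M i j * v j‖ := norm_sum_le _ _
    _ = ∑ j, ‖M i j‖ * ‖v j‖ := by
        simp [norm_mul]
    _ ≤ ∑ j, ‖M i j‖ * ‖v‖ := by
        refine Finset.sum_le_sum fun j _ => ?_
        exact mul_le_mul_of_nonneg_left (norm_le_pi_norm v j) (norm_nonneg _)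
    _ = (∑ j, ‖M i j‖) * ‖v‖ := (Finset.sum_mul _ _ _).symm
    _ ≤ normInf M * ‖v‖ := by
        refine mul_le_mul_of_nonneg_right ?_ (norm_nonneg v)
        exact le_ciSup (f := fun i => ∑ j, ‖M i j‖) (Set.Finite.bddAbove (Set.finite_range _)) i

theorem stmt_12 {n : ℕ} (A ΔA : Matrix (Fin n) (Fin n) ℂ)
    (x y b Δb : Fin n → ℂ) (ε : ℝ) (hε : 0 ≤ ε)
    (hA : IsUnit A) (hb : b ≠ 0)
    (hAx : A.mulVec x = b)
    (hpert : (A + ΔA).mulVec y = b + Δb)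
    (hΔA : normInf ΔA ≤ ε * normInf A)
    (hΔb : ‖Δb‖ ≤ ε * ‖b‖)
    (hsmall : ε * condInf A ≤ 1 / 2) :
    ‖x - y‖ / ‖x‖ ≤ 4 * ε * condInf A := by
  rcases Nat.eq_zero_or_pos n with hn | hn
  · subst hn; exact absurd (Subsingleton.elim b 0) hb
  haveI : NeZero n := ⟨hn.ne'⟩
  have hdet : IsUnit A.det := (Matrix.isUnit_iff_isUnit_det A).mp hA
  have hinv : A⁻¹ * A = 1 := Matrix.nonsing_inv_mul A hdet
  -- x - y = A⁻¹ (ΔA y - Δb)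
  have hAxy : A.mulVec (x - y) = ΔA.mulVec y - Δb := by
    have h1 : A.mulVec y + ΔA.mulVec y = b + Δb := by
      rw [← Matrix.add_mulVec]; exact hpert
    have h2 : A.mulVec (x - y) = A.mulVec x - A.mulVec y := by
      simp [Matrix.mulVec_sub]
    rw [h2, hAx]
    have : A.mulVec y = b + Δb - ΔA.mulVec y := by
      rw [← h1]; abel
    rw [this]; abel
  have hkey : x - y = A⁻¹.mulVec (ΔA.mulVec y - Δb) := by
    rw [← hAxy, Matrix.mulVec_mulVec, hinv, Matrix.one_mulVec]
  -- norms
  set K := condInf A with hK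
  have hAnn : 0 ≤ normInf A := normInf_nonneg A
  have hAinn : 0 ≤ normInf A⁻¹ := normInf_nonneg A⁻¹
  have hKnn : 0 ≤ K := mul_nonneg hAnn hAinn
  have hbx : ‖b‖ ≤ normInf A * ‖x‖ := hAx ▸ mulVec_norm_le A x
  have hy : ‖y‖ ≤ ‖x‖ + ‖x - y‖ := by
    calc ‖y‖ = ‖x - (x - y)‖ := by congr 1; abel
      _ ≤ ‖x‖ + ‖x - y‖ := norm_sub_le _ _
  have hd : ‖x - y‖ ≤ normInf A⁻¹ * (normInf ΔA * ‖y‖ + ‖Δb‖) := by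
    rw [hkey]
    calc ‖A⁻¹.mulVec (ΔA.mulVec y - Δb)‖
        ≤ normInf A⁻¹ * ‖ΔA.mulVec y - Δb‖ := mulVec_norm_le _ _
      _ ≤ normInf A⁻¹ * (‖ΔA.mulVec y‖ + ‖Δb‖) :=
          mul_le_mul_of_nonneg_left (norm_sub_le _ _) hAinn
      _ ≤ normInf A⁻¹ * (normInf ΔA * ‖y‖ + ‖Δb‖) := by
          refine mul_le_mul_of_nonneg_left (add_le_add (mulVec_norm_le _ _) le_rfl) hAinn
  have hxpos : 0 < ‖x‖ := by
    rcases eq_or_ne x 0 with hx0 | hx0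
    · exfalso; apply hb; rw [← hAx, hx0, Matrix.mulVec_zero]
    · exact norm_pos_iff.mpr hx0
  -- combine
  have hynn : 0 ≤ ‖y‖ := norm_nonneg y
  have hd2 : ‖x - y‖ ≤ ε * K * ‖y‖ + ε * K * ‖x‖ := by
    have h1 : normInf ΔA * ‖y‖ ≤ ε * normInf A * ‖y‖ :=
      mul_le_mul_of_nonneg_right hΔA hynn
    have h2 : ‖Δb‖ ≤ ε * (normInf A * ‖x‖) := by
      calc ‖Δb‖ ≤ ε * ‖b‖ := hΔb
        _ ≤ ε * (normInf A * ‖x‖) := mul_le_mul_of_nonneg_left hbx hε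
    calc ‖x - y‖ ≤ normInf A⁻¹ * (normInf ΔA * ‖y‖ + ‖Δb‖) := hd
      _ ≤ normInf A⁻¹ * (ε * normInf A * ‖y‖ + ε * (normInf A * ‖x‖)) := by
          refine mul_le_mul_of_nonneg_left (add_le_add h1 h2) hAinn
      _ = ε * K * ‖y‖ + ε * K * ‖x‖ := by rw [hK]; unfold condInf; ring
  rw [div_le_iff₀ hxpos]
  nlinarith [norm_nonneg (x - y), mul_nonneg hε hKnn, hy, hd2, hxpos.le,
    mul_le_mul_of_nonneg_right hsmall (norm_nonneg (x - y))]
end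

section
/- Let a_1,…,a_n be distinct nonzero complex numbers, x ∈ ℂ^n a vector supported on E ⊆ {1,…,n} with |E| = k, and define syndromes y_i = Σ_j x_j a_j^i for i = 0,…,2k−1. Then h = (h_k, h_{k-1}, …, h_0) given by the coefficients of L(z) = ∏_{e∈E}(1 − z a_e) = Σ_{i=0}^k h_{k-i} z^i (suitably ordered) satisfies the k × (k+1) Toeplitz system: Σ_{j=0}^{k} y_{i+j} · c_j = 0 for i = 0,…,k−1, where c_j are the coefficients of L arranged so that the error locator polynomial annihilates the syndrome recurrence. -/
open Polynomial

theorem stmt_16 {n k : ℕ} (a : Fin n → ℂ) (hdist : Function.Injective a)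
    (ha : ∀ j, a j ≠ 0)
    (x : Fin n → ℂ) (E : Finset (Fin n)) (hE : E.card = k)
    (hsupp : ∀ j, j ∉ E → x j = 0)
    (y : ℕ → ℂ) (hy : ∀ i, y i = ∑ j : Fin n, x j * a j ^ i)
    (L : Polynomial ℂ) (hL : L = ∏ e ∈ E, (1 - Polynomial.C (a e) * Polynomial.X)) :
    ∀ i : ℕ, ∑ j ∈ Finset.range (k + 1), L.coeff j * y (i + k - j) = 0 := by
  intro i
  simp only [hy, Finset.mul_sum]
  rw [Finset.sum_comm]
  apply Finset.sum_eq_zero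
  intro e _
  by_cases he : e ∈ E
  · have : ∀ j ∈ Finset.range (k+1),
        L.coeff j * (x e * a e ^ (i + k - j)) =
        x e * a e ^ i * (L.coeff j * (a e ^ (k - j))) := by
      intro j hj
      rw [Finset.mem_range] at hj
      have : i + k - j = i + (k - j) := by omega
      rw [this, pow_add]; ring
    rw [Finset.sum_congr rfl this, ← Finset.mul_sum]
    have hval : ∑ j ∈ Finset.range (k+1), L.coeff j * a e ^ (k - j) = 0 := by
      have hcalc : ∑ j ∈ Finset.range (k+1), L.coeff j * a e ^ (k - j)
          = a e ^ k * L.eval (a e)⁻¹ := by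
        have hdeg : L.natDegree ≤ k := by
          rw [hL]
          calc (∏ e ∈ E, (1 - Polynomial.C (a e) * Polynomial.X)).natDegree
              ≤ ∑ e ∈ E, (1 - Polynomial.C (a e) * Polynomial.X).natDegree :=
                Polynomial.natDegree_prod_le _ _
            _ ≤ ∑ e ∈ E, 1 := by
                apply Finset.sum_le_sum
                intro f _
                have : (1 - Polynomial.C (a f) * Polynomial.X) = Polynomial.C 1 - Polynomial.C (a f) * Polynomial.X := by simp
                rw [this]
                refine (Polynomial.natDegree_sub_le _ _).trans ?_
                simp only [Polynomial.natDegree_one, max_le_iff]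
                exact ⟨by simp, (Polynomial.natDegree_C_mul_le _ _).trans (by simp)⟩
            _ = k := by simp [hE]
        rw [Polynomial.eval_eq_sum_range' (lt_of_le_of_lt hdeg (Nat.lt_succ_self k)),
          Finset.mul_sum]
        apply Finset.sum_congr rfl
        intro j hj
        rw [Finset.mem_range] at hj
        rw [inv_pow]
        field_simp
        rw [eq_div_iff (pow_ne_zero _ (ha e)), mul_assoc, ← pow_add,
          Nat.sub_add_cancel (by omega : j ≤ k), mul_comm]
      rw [hcalc, hL]
      have : (∏ f ∈ E, (1 - Polynomial.C (a f) * Polynomial.X)).eval (a e)⁻¹ = 0 := by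
        rw [Polynomial.eval_prod]
        apply Finset.prod_eq_zero he
        simp [ha e]
      rw [this, mul_zero]
    rw [hval, mul_zero]
  · simp [hsupp e he]
end
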